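/- arXiv:1202.4338 — 3 statements merged into one kernel-verified Lean document; each statement's English description precedes it below -/
import Mathlib

section
/- Let d ≥ 1, ω ≥ 0 and M > 0. Let 𝒜 = (A_k)_{k∈ℤ} be a sequence of linear isomorphisms of ℝ^d such that ‖A_k‖ ≤ M and ‖A_k⁻¹‖ ≤ M for all k ∈ ℤ. If 𝒜 has Perron property B_ω(ℤ), then B^+(𝒜) + B^−(𝒜) = ℝ^d. -/
noncomputable section

open Filter Topology

/-- `ℝ^d`. -/
abbrev Ed (d : ℕ) := EuclideanSpace ℝ (Fin d)

/-- The weight `(|k| + 1) ^ ω`. -/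
noncomputable def wt (ω : ℝ) (k : ℤ) : ℝ := (|(k : ℝ)| + 1) ^ ω

/-- `PhiNat A l n = A (l+n-1) ∘ … ∘ A l`. -/
noncomputable def PhiNat {d : ℕ} (A : ℤ → (Ed d ≃L[ℝ] Ed d)) (l : ℤ) :
    ℕ → (Ed d ≃L[ℝ] Ed d)
  | 0 => ContinuousLinearEquiv.refl ℝ (Ed d)
  | n + 1 => (PhiNat A l n).trans (A (l + n))

/-- The Cauchy matrix `Φ_{m,l}`. -/
noncomputable def Phi {d : ℕ} (A : ℤ → (Ed d ≃L[ℝ] Ed d)) (m l : ℤ) : Ed d ≃L[ℝ] Ed d :=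
  if l ≤ m then PhiNat A l (m - l).toNat else (PhiNat A m (l - m).toNat).symm

/-- Hyperbolicity on `I` with explicit data. -/
def HyperbolicOnWith {d : ℕ} (A : ℤ → (Ed d ≃L[ℝ] Ed d)) (I : Set ℤ) (K lam : ℝ)
    (P Q : ℤ → (Ed d →L[ℝ] Ed d)) : Prop :=
  0 < K ∧ 0 < lam ∧ lam < 1 ∧
  (∀ k ∈ I, P k + Q k = 1) ∧
  (∀ k ∈ I, (P k).comp (P k) = P k ∧ (Q k).comp (Q k) = Q k) ∧
  (∀ k ∈ I, IsCompl (LinearMap.range (P k : Ed d →ₗ[ℝ] Ed d)) (LinearMap.range (Q k : Ed d →ₗ[ℝ] Ed d))) ∧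
  (∀ k ∈ I, k + 1 ∈ I →
      (A k) '' (LinearMap.range (P k : Ed d →ₗ[ℝ] Ed d) : Set (Ed d)) = (LinearMap.range (P (k + 1) : Ed d →ₗ[ℝ] Ed d) : Set (Ed d)) ∧
      (A k) '' (LinearMap.range (Q k : Ed d →ₗ[ℝ] Ed d) : Set (Ed d)) = (LinearMap.range (Q (k + 1) : Ed d →ₗ[ℝ] Ed d) : Set (Ed d))) ∧
  (∀ l ∈ I, ∀ k ∈ I, l ≤ k → ∀ v ∈ LinearMap.range (P l : Ed d →ₗ[ℝ] Ed d),
      ‖(Phi A k l) v‖ ≤ K * lam ^ (k - l).toNat * ‖v‖) ∧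
  (∀ l ∈ I, ∀ k ∈ I, k ≤ l → ∀ v ∈ LinearMap.range (Q l : Ed d →ₗ[ℝ] Ed d),
      ‖(Phi A k l) v‖ ≤ K * lam ^ (l - k).toNat * ‖v‖) ∧
  (∀ k ∈ I, ‖P k‖ ≤ K ∧ ‖Q k‖ ≤ K)

/-- The sequence `A` is hyperbolic on `I`. -/
def IsHyperbolicOn {d : ℕ} (A : ℤ → (Ed d ≃L[ℝ] Ed d)) (I : Set ℤ) : Prop :=
  ∃ (K lam : ℝ) (P Q : ℤ → (Ed d →L[ℝ] Ed d)), HyperbolicOnWith A I K lam P Q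

/-- Perron property `B_ω(ℤ+)`. -/
def PerronBPos {d : ℕ} (ω : ℝ) (A : ℤ → (Ed d ≃L[ℝ] Ed d)) : Prop :=
  ∀ f : ℤ → Ed d, f 0 = 0 → (∃ C : ℝ, ∀ k : ℤ, 0 ≤ k → ‖f k‖ * wt ω k ≤ C) →
    ∃ x : ℤ → Ed d, (∃ C : ℝ, ∀ k : ℤ, 0 ≤ k → ‖x k‖ * wt ω k ≤ C) ∧
      ∀ k : ℤ, 0 ≤ k → x (k + 1) = A k (x k) + f (k + 1)

/-- Perron property `B_ω(ℤ)`. -/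
def PerronBZ {d : ℕ} (ω : ℝ) (A : ℤ → (Ed d ≃L[ℝ] Ed d)) : Prop :=
  ∀ f : ℤ → Ed d, (∃ C : ℝ, ∀ k : ℤ, ‖f k‖ * wt ω k ≤ C) →
    ∃ x : ℤ → Ed d, (∃ C : ℝ, ∀ k : ℤ, ‖x k‖ * wt ω k ≤ C) ∧
      ∀ k : ℤ, x (k + 1) = A k (x k) + f (k + 1)

/-- `B^+(𝒜)`. -/
def Bplus {d : ℕ} (A : ℤ → (Ed d ≃L[ℝ] Ed d)) : Set (Ed d) :=
  {v | Tendsto (fun k : ℤ => ‖(Phi A k 0) v‖) atTop (𝓝 0)}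

/-- `B^-(𝒜)`. -/
def Bminus {d : ℕ} (A : ℤ → (Ed d ≃L[ℝ] Ed d)) : Set (Ed d) :=
  {v | Tendsto (fun k : ℤ => ‖(Phi A k 0) v‖) atBot (𝓝 0)}

variable {d : ℕ} (A : ℤ → (Ed d ≃L[ℝ] Ed d))

lemma PhiNat_succ_left (l : ℤ) (n : ℕ) :
    PhiNat A l (n + 1) = (A l).trans (PhiNat A (l + 1) n) := by
  induction n generalizing l with
  | zero =>
    ext u
    simp [PhiNat]
  | succ n ih =>
    show (PhiNat A l (n+1)).trans (A (l + (n+1))) = _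
    rw [ih]
    show ((A l).trans (PhiNat A (l+1) n)).trans (A (l + (n+1))) = _
    have : PhiNat A (l+1) (n+1) = (PhiNat A (l+1) n).trans (A ((l+1) + n)) := rfl
    rw [this]
    have h4 : l + ((n:ℤ)+1) = (l + 1) + (n : ℕ) := by push_cast; ring
    rw [h4]
    ext u
    rfl

lemma Phi_zero (k : ℤ) : Phi A k k = ContinuousLinearEquiv.refl ℝ (Ed d) := by
  simp [Phi, PhiNat]

lemma Phi_succ_apply (k : ℤ) (u : Ed d) :
    Phi A (k + 1) 0 u = A k (Phi A k 0 u) := by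
  rcases le_or_gt 0 k with hk | hk
  · have h1 : Phi A (k+1) 0 = PhiNat A 0 ((k+1).toNat) := by
      rw [Phi, if_pos (by omega)]
      norm_num
    have h2 : Phi A k 0 = PhiNat A 0 (k.toNat) := by
      rw [Phi, if_pos hk]; norm_num
    have h3 : (k+1).toNat = k.toNat + 1 := by omega
    rw [h1, h2, h3]
    show (PhiNat A 0 k.toNat).trans (A (0 + k.toNat)) u = _
    have : ((0 : ℤ) + (k.toNat : ℤ)) = k := by omega
    rw [this]
    rfl
  · -- k < 0
    have hk1 : k + 1 ≤ 0 := by omega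
    have h2 : Phi A k 0 = (PhiNat A k ((-k).toNat)).symm := by
      rw [Phi, if_neg (by omega)]
      norm_num
    have hn : (-k).toNat = (-(k+1)).toNat + 1 := by omega
    rw [h2, hn, PhiNat_succ_left]
    -- Phi A (k+1) 0 = (PhiNat A (k+1) (-(k+1)).toNat).symm
    have h1 : Phi A (k+1) 0 = (PhiNat A (k+1) ((-(k+1)).toNat)).symm := by
      rcases eq_or_lt_of_le hk1 with he | hl
      · rw [he]
        have : ((-(0:ℤ)).toNat) = 0 := by omega
        rw [this]
        rw [Phi, if_pos le_rfl]
        ext u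
        simp [PhiNat]
      · rw [Phi, if_neg (by omega)]
        norm_num
    rw [h1]
    simp [ContinuousLinearEquiv.symm_trans_apply]

lemma Phi_hom_forward {x : ℤ → Ed d} (h : ∀ k : ℤ, 0 ≤ k → x (k + 1) = A k (x k)) :
    ∀ k : ℤ, 0 ≤ k → x k = Phi A k 0 (x 0) := by
  refine Int.le_induction ?_ ?_
  · simp [Phi_zero]
  · intro k hk ih
    rw [h k hk, ih, Phi_succ_apply]

lemma Phi_hom_backward {x : ℤ → Ed d} (h : ∀ k : ℤ, k ≤ -1 → x (k + 1) = A k (x k)) :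
    ∀ k : ℤ, k ≤ 0 → x k = Phi A k 0 (x 0) := by
  have key : ∀ n : ℕ, x (-(n:ℤ)) = Phi A (-(n:ℤ)) 0 (x 0) := by
    intro n
    induction n with
    | zero => simp [Phi_zero]
    | succ n ih =>
      have hrec : x (-(n+1:ℕ) + 1) = A (-(n+1:ℕ)) (x (-(n+1:ℕ))) := h _ (by push_cast; omega)
      have hphi : Phi A (-(n+1:ℕ) + 1) 0 (x 0) = A (-(n+1:ℕ)) (Phi A (-(n+1:ℕ)) 0 (x 0)) :=
        Phi_succ_apply A _ _
      have hcast : (-(n+1:ℕ) + 1 : ℤ) = -(n:ℕ) := by push_cast; ring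
      rw [hcast] at hrec hphi
      rw [ih] at hrec
      exact (A (-(n+1:ℕ))).injective (hrec.symm.trans hphi)
  intro k hk
  have : k = -((-k).toNat : ℤ) := by omega
  rw [this]
  exact key _

lemma one_le_wt {ω : ℝ} (hω : 0 ≤ ω) (k : ℤ) : 1 ≤ wt ω k := by
  rw [wt]
  have h1 : (1:ℝ) ≤ |(k:ℝ)| + 1 := by linarith [abs_nonneg ((k:ℝ))]
  calc (1:ℝ) = 1 ^ ω := (Real.one_rpow ω).symm
  _ ≤ (|(k:ℝ)| + 1) ^ ω := Real.rpow_le_rpow zero_le_one h1 hω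

lemma wt_pos {ω : ℝ} (k : ℤ) : 0 < wt ω k := by
  rw [wt]; positivity

lemma wt_neg (ω : ℝ) (k : ℤ) : wt ω (-k) = wt ω k := by
  simp [wt]

lemma wt_reflect {ω : ℝ} (hω : 0 ≤ ω) (j : ℤ) : wt ω j ≤ 2 ^ ω * wt ω (1 - j) := by
  rw [wt, wt, ← Real.mul_rpow (by norm_num) (by positivity)]
  apply Real.rpow_le_rpow (by positivity) _ hω
  push_cast
  have h2 : |(j:ℝ)| = |(1 - (j:ℝ)) + (-1)| := by
    rw [show (1-(j:ℝ))+(-1) = -j by ring, abs_neg]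
  have h3 := abs_add_le (1 - (j:ℝ)) (-1)
  rw [← h2] at h3
  simp only [abs_neg, abs_one] at h3
  linarith [abs_nonneg (1 - (j:ℝ))]

lemma Phi_reverse (k : ℕ) (u : Ed d) :
    Phi (fun j => (A (-j-1)).symm) (k : ℤ) 0 u = Phi A (-(k:ℤ)) 0 u := by
  induction k generalizing u with
  | zero => simp [Phi_zero]
  | succ k ih =>
    have h1 : ((k+1:ℕ) : ℤ) = (k:ℤ) + 1 := by push_cast; ring
    rw [h1, Phi_succ_apply]
    rw [ih]
    have h2 : Phi A (-((k:ℤ)+1) + 1) 0 u = A (-((k:ℤ)+1)) (Phi A (-((k:ℤ)+1)) 0 u) :=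
      Phi_succ_apply A _ _
    have h3 : (-((k:ℤ)+1) + 1) = -(k:ℤ) := by ring
    rw [h3] at h2
    rw [h2]
    have h4 : (-(k:ℤ)-1) = -((k:ℤ)+1) := by ring
    simp [h4]

lemma PerronBZ_reverse {ω M : ℝ} (hω : 0 ≤ ω) (hM : 0 < M)
    (hA : ∀ k : ℤ, ‖(A k : Ed d →L[ℝ] Ed d)‖ ≤ M ∧
      ‖((A k).symm : Ed d →L[ℝ] Ed d)‖ ≤ M)
    (hperron : PerronBZ ω A) : PerronBZ ω (fun j => (A (-j-1)).symm) := by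
  intro g ⟨C, hC⟩
  set f : ℤ → Ed d := fun j => -(A (j-1)) (g (1 - j)) with hf
  have hfb : ∃ C' : ℝ, ∀ k : ℤ, ‖f k‖ * wt ω k ≤ C' := by
    refine ⟨M * (2 ^ ω * C), fun k => ?_⟩
    have h1 : ‖f k‖ ≤ M * ‖g (1 - k)‖ := by
      rw [hf]
      simp only [norm_neg]
      calc ‖(A (k-1)) (g (1-k))‖ ≤ ‖(A (k-1) : Ed d →L[ℝ] Ed d)‖ * ‖g (1-k)‖ := by
            exact (A (k-1) : Ed d →L[ℝ] Ed d).le_opNorm _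
      _ ≤ M * ‖g (1-k)‖ := by
            exact mul_le_mul_of_nonneg_right (hA (k-1)).1 (norm_nonneg _)
    have h2 : wt ω k ≤ 2 ^ ω * wt ω (1 - k) := wt_reflect hω k
    have hg := hC (1 - k)
    have hgn : (0:ℝ) ≤ ‖g (1-k)‖ := norm_nonneg _
    have hwn : (0:ℝ) < wt ω (1-k) := wt_pos _
    calc ‖f k‖ * wt ω k ≤ (M * ‖g (1-k)‖) * (2 ^ ω * wt ω (1 - k)) := by
          apply mul_le_mul h1 h2 (le_of_lt (wt_pos _)) (by positivity)
    _ = M * (2 ^ ω * (‖g (1-k)‖ * wt ω (1-k))) := by ring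
    _ ≤ M * (2 ^ ω * C) := by
          apply mul_le_mul_of_nonneg_left _ (le_of_lt hM)
          apply mul_le_mul_of_nonneg_left hg (by positivity)
  obtain ⟨x, ⟨Cx, hCx⟩, hxsol⟩ := hperron f hfb
  refine ⟨fun k => x (-k), ⟨Cx, fun k => ?_⟩, fun k => ?_⟩
  · rw [← wt_neg ω k]; exact hCx (-k)
  · -- goal : x (-(k+1)) = (A (-k-1)).symm (x (-k)) + g (k+1)
    have hs := hxsol (-(k+1))
    -- x (-(k+1)+1) = A (-(k+1)) (x (-(k+1))) + f (-(k+1)+1)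
    have h3 : (-(k+1) + 1 : ℤ) = -k := by ring
    rw [h3] at hs
    have h4 : f (-k) = -(A (-k-1)) (g (k+1)) := by
      rw [hf]
      have : (-k - 1 : ℤ) = -k-1 := rfl
      have h5 : (1 - (-k) : ℤ) = k+1 := by ring
      simp only [h5]
    have h6 : (-(k+1) : ℤ) = -k-1 := by ring
    rw [h4, h6] at hs
    -- hs : x (-k) = A (-k-1) (x (-k-1)) + -(A (-k-1)) (g (k+1))
    have := congrArg (fun z => (A (-k-1)).symm z) hs
    simp only [map_add, map_neg, ContinuousLinearEquiv.symm_apply_apply] at this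
    show x (-(k+1)) = _
    rw [h6, this]
    abel

open Finset in
lemma G_hom (x : ℕ → ℤ → Ed d) (v : Ed d)
    (h0 : ∀ k, x 0 k = Phi A k 0 v) (m : ℕ)
    (hrec : ∀ i < m, ∀ k : ℤ, 0 ≤ k → x (i+1) (k+1) = A k (x (i+1) k) + x i (k+1)) :
    ∀ k : ℤ, 0 ≤ k → Phi A k 0 (x m 0) =
      ∑ j ∈ Finset.range (m+1),
        (((-1:ℝ)^(m-j)) * (k.toNat.choose (m-j) : ℝ)) • x j k := by
  set G : ℤ → Ed d := fun k =>
    ∑ j ∈ Finset.range (m+1), (((-1:ℝ)^(m-j)) * (k.toNat.choose (m-j) : ℝ)) • x j k with hGdef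
  have hG0 : G 0 = x m 0 := by
    rw [hGdef]
    simp only
    rw [Finset.sum_range_succ]
    have hz : ∀ j ∈ Finset.range m,
        (((-1:ℝ)^(m-j)) * (((0:ℤ).toNat.choose (m-j) : ℕ) : ℝ)) • x j 0 = 0 := by
      intro j hj
      rw [Finset.mem_range] at hj
      have : (0:ℤ).toNat.choose (m-j) = 0 := Nat.choose_eq_zero_of_lt (by omega)
      rw [this]
      simp
    rw [Finset.sum_eq_zero hz]
    simp
  have hGhom : ∀ k : ℤ, 0 ≤ k → G (k+1) = A k (G k) := by
    intro k hk
    set n := k.toNat with hn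
    have hkn : (k+1).toNat = n + 1 := by omega
    set b : ℕ → ℝ := fun j => ((-1:ℝ)^(m-j)) * (n.choose (m-j) : ℝ) with hb
    have hGk1 : G (k+1) = ∑ j ∈ Finset.range (m+1),
        (((-1:ℝ)^(m-j)) * ((n+1).choose (m-j) : ℝ)) • x j (k+1) := by
      rw [hGdef]; simp only [hkn]
    -- coefficient split
    have hsplit : G (k+1) = (∑ j ∈ Finset.range (m+1), b j • x j (k+1))
        - ∑ j ∈ Finset.range m, b (j+1) • x j (k+1) := by
      rw [hGk1, Finset.sum_range_succ, Finset.sum_range_succ (fun j => b j • x j (k+1))]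
      have htop : (((-1:ℝ)^(m-m)) * ((n+1).choose (m-m) : ℝ)) • x m (k+1)
          = b m • x m (k+1) := by simp [hb]
      rw [htop]
      have hmid : ∑ j ∈ Finset.range m,
          (((-1:ℝ)^(m-j)) * ((n+1).choose (m-j) : ℝ)) • x j (k+1)
          = ∑ j ∈ Finset.range m, (b j • x j (k+1) - b (j+1) • x j (k+1)) := by
        apply Finset.sum_congr rfl
        intro j hj
        rw [Finset.mem_range] at hj
        have h1 : m - j = (m - j - 1) + 1 := by omega
        have h2 : m - (j+1) = m - j - 1 := by omega
        have hpascal : ((n+1).choose (m-j) : ℝ)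
            = (n.choose (m-j) : ℝ) + (n.choose (m-j-1) : ℝ) := by
          rw [h1, Nat.choose_succ_succ]
          push_cast
          ring
        have hsign : ((-1:ℝ)^(m-j)) = -((-1:ℝ)^(m-j-1)) := by
          conv_lhs => rw [h1]
          rw [pow_succ]
          ring
        rw [hpascal, hb]
        simp only [h2]
        rw [hsign]
        module
      rw [hmid, Finset.sum_sub_distrib]
      abel
    -- recursion substitution on the first sum
    have hx0 : x 0 (k+1) = A k (x 0 k) := by
      rw [h0, h0, Phi_succ_apply]
    have hfirst : ∑ j ∈ Finset.range (m+1), b j • x j (k+1)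
        = (∑ j ∈ Finset.range (m+1), b j • A k (x j k))
          + ∑ j ∈ Finset.range m, b (j+1) • x j (k+1) := by
      have hre : ∀ j ∈ Finset.range (m+1), b j • x j (k+1)
          = b j • A k (x j k) + (if j = 0 then 0 else b j • x (j-1) (k+1)) := by
        intro j hj
        rw [Finset.mem_range] at hj
        rcases Nat.eq_zero_or_pos j with h | h
        · subst h
          rw [hx0]
          simp
        · obtain ⟨i, rfl⟩ : ∃ i, j = i + 1 := ⟨j - 1, by omega⟩
          rw [hrec i (by omega) k hk]
          rw [if_neg (by omega)]
          simp [smul_add]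
      rw [Finset.sum_congr rfl hre, Finset.sum_add_distrib]
      congr 1
      rw [Finset.sum_range_succ' (fun j => if j = 0 then (0 : Ed d) else b j • x (j-1) (k+1))]
      simp
    rw [hsplit, hfirst]
    have : A k (G k) = ∑ j ∈ Finset.range (m+1), b j • A k (x j k) := by
      rw [hGdef]
      simp only
      rw [map_sum]
      apply Finset.sum_congr rfl
      intro j hj
      rw [map_smul]
    rw [this]
    abel
  intro k hk
  have := Phi_hom_forward A hGhom k hk
  rw [← hG0, ← this]

lemma family_exists {ω : ℝ} (hω : 0 ≤ ω) (hperron : PerronBZ ω A) (v : Ed d) (C₀ : ℝ)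
    (hv : ∀ k : ℤ, 0 ≤ k → ‖Phi A k 0 v‖ * wt ω k ≤ C₀) (m : ℕ) :
    ∃ x : ℕ → ℤ → Ed d,
      (∀ k, x 0 k = Phi A k 0 v) ∧
      (∀ i < m, ∀ k : ℤ, 0 ≤ k → x (i+1) (k+1) = A k (x (i+1) k) + x i (k+1)) ∧
      (∀ i, ∃ C, ∀ k : ℤ, 0 ≤ k → ‖x i k‖ * wt ω k ≤ C) := by
  induction m with
  | zero =>
    refine ⟨fun _ k => Phi A k 0 v, fun k => rfl, by omega, fun i => ⟨C₀, hv⟩⟩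
  | succ m ih =>
    obtain ⟨x, h0, hrec, hbd⟩ := ih
    obtain ⟨Cm, hCm⟩ := hbd m
    set f : ℤ → Ed d := fun k => if 1 ≤ k then x m k else 0 with hf
    have hfb : ∃ C : ℝ, ∀ k : ℤ, ‖f k‖ * wt ω k ≤ C := by
      refine ⟨max Cm 0, fun k => ?_⟩
      have hfk : f k = if 1 ≤ k then x m k else 0 := rfl
      rw [hfk]
      rcases le_or_gt 1 k with h | h
      · rw [if_pos h]
        exact le_trans (hCm k (by omega)) (le_max_left _ _)
      · rw [if_neg (not_le.mpr h)]
        simp [le_max_right]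
    obtain ⟨x', ⟨Cx, hCx⟩, hxsol⟩ := hperron f hfb
    refine ⟨Function.update x (m+1) x', ?_, ?_, ?_⟩
    · intro k
      rw [Function.update_of_ne (by omega)]
      exact h0 k
    · intro i hi k hk
      rcases Nat.lt_succ_iff_lt_or_eq.mp hi with h | h
      · rw [Function.update_of_ne (by omega), Function.update_of_ne (by omega)]
        exact hrec i h k hk
      · subst h
        rw [Function.update_self, Function.update_of_ne (by omega)]
        rw [hxsol k]
        congr 1
        show (if (1:ℤ) ≤ k + 1 then _ else _) = _
        rw [if_pos (by omega)]
    · intro i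
      rcases eq_or_ne i (m+1) with h | h
      · subst h
        rw [Function.update_self]
        exact ⟨Cx, fun k _ => hCx k⟩
      · rw [Function.update_of_ne h]
        exact hbd i

set_option maxHeartbeats 2000000 in
open Finset in
lemma forward_decay {ω : ℝ} (hω : 0 ≤ ω) (hperron : PerronBZ ω A) (v : Ed d) (C₀ : ℝ)
    (hv : ∀ k : ℤ, 0 ≤ k → ‖Phi A k 0 v‖ * wt ω k ≤ C₀) :
    Tendsto (fun k : ℤ => ‖(Phi A k 0) v‖) atTop (𝓝 0) := by
  by_cases hv0 : v = 0
  · subst hv0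
    simp only [map_zero, norm_zero]
    exact tendsto_const_nhds
  obtain ⟨x, h0, hrec, hbd⟩ := family_exists A hω hperron v C₀ hv d
  choose C hC using hbd
  set CM : ℝ := ∑ j ∈ Finset.range (d+1), |C j| with hCM
  have hCMnn : 0 ≤ CM := Finset.sum_nonneg (fun j _ => abs_nonneg _)
  have hxb : ∀ i ≤ d, ∀ k : ℤ, 0 ≤ k → ‖x i k‖ ≤ CM := by
    intro i hi k hk
    have h1 : ‖x i k‖ ≤ C i := by
      have := hC i k hk
      have hw := one_le_wt hω k
      nlinarith [norm_nonneg (x i k)]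
    refine h1.trans ((le_abs_self _).trans ?_)
    exact Finset.single_le_sum (fun j _ => abs_nonneg (C j)) (Finset.mem_range.mpr (by omega))
  have hExp : ∀ i ≤ d, ∀ k : ℤ, 0 ≤ k → Phi A k 0 (x i 0) =
      ∑ j ∈ Finset.range (i+1),
        (((-1:ℝ)^(i-j)) * (k.toNat.choose (i-j) : ℝ)) • x j k := by
    intro i hi
    exact G_hom A x v h0 i (fun i' hi' => hrec i' (by omega))
  -- error terms
  set E : ℕ → ℤ → Ed d := fun i k =>
    Phi A k 0 (x i 0) - (((-1:ℝ)^i) * (k.toNat.choose i : ℝ)) • x 0 k with hE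
  have hErr : ∀ i ≤ d, ∀ k : ℤ, 0 ≤ k →
      ‖E i k‖ ≤ (d:ℝ) * CM * ((k.toNat:ℝ)+1)^(i-1) := by
    intro i hi k hk
    have hsum := hExp i hi k hk
    set n := k.toNat with hn
    have hEk : E i k = ∑ j ∈ Finset.range i,
        (((-1:ℝ)^(i-(j+1))) * (n.choose (i-(j+1)) : ℝ)) • x (j+1) k := by
      rw [hE]
      simp only
      rw [hsum, Finset.sum_range_succ'
        (fun j => (((-1:ℝ)^(i-j)) * (n.choose (i-j) : ℝ)) • x j k)]
      simp [← hn]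
    rw [hEk]
    have hone : (1:ℝ) ≤ (n:ℝ) + 1 := by linarith [Nat.cast_nonneg (α := ℝ) n]
    calc ‖∑ j ∈ Finset.range i, (((-1:ℝ)^(i-(j+1))) * (n.choose (i-(j+1)) : ℝ)) • x (j+1) k‖
        ≤ ∑ j ∈ Finset.range i, ‖(((-1:ℝ)^(i-(j+1))) * (n.choose (i-(j+1)) : ℝ)) • x (j+1) k‖ :=
          norm_sum_le _ _
      _ ≤ ∑ j ∈ Finset.range i, ((n:ℝ)+1)^(i-1) * CM := by
          apply Finset.sum_le_sum
          intro j hj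
          rw [Finset.mem_range] at hj
          rw [norm_smul]
          have h1 : ‖((-1:ℝ)^(i-(j+1))) * (n.choose (i-(j+1)) : ℝ)‖
              = (n.choose (i-(j+1)) : ℝ) := by
            rw [norm_mul, norm_pow, norm_neg, norm_one, one_pow, one_mul,
              Real.norm_eq_abs, abs_of_nonneg (by positivity)]
          rw [h1]
          have h2 : (n.choose (i-(j+1)) : ℝ) ≤ ((n:ℝ)+1)^(i-1) := by
            calc (n.choose (i-(j+1)) : ℝ) ≤ ((n:ℝ))^(i-(j+1)) := by
                  exact_mod_cast Nat.choose_le_pow n (i-(j+1))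
              _ ≤ ((n:ℝ)+1)^(i-(j+1)) := by
                  apply pow_le_pow_left₀ (by positivity) (by linarith) _
              _ ≤ ((n:ℝ)+1)^(i-1) := by
                  apply pow_le_pow_right₀ hone (by omega)
          apply mul_le_mul h2 (hxb (j+1) (by omega) k hk) (norm_nonneg _) (by positivity)
      _ = (i:ℝ) * (((n:ℝ)+1)^(i-1) * CM) := by
          rw [Finset.sum_const, Finset.card_range]
          simp [mul_assoc]
      _ ≤ (d:ℝ) * CM * ((n:ℝ)+1)^(i-1) := by
          have h5 : (i:ℝ) ≤ (d:ℝ) := by exact_mod_cast hi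
          have hP : (0:ℝ) ≤ ((n:ℝ)+1)^(i-1) := by positivity
          nlinarith [mul_nonneg hP hCMnn]
  -- linear dependence
  set W : Fin (d+1) → Ed d := fun i => x (i:ℕ) 0 with hW
  have hdep : ¬ LinearIndependent ℝ W := by
    intro hli
    have h1 := hli.fintype_card_le_finrank
    rw [finrank_euclideanSpace_fin] at h1
    simp at h1
  obtain ⟨g, hgsum, i₀, hgi₀⟩ := Fintype.not_linearIndependent_iff.mp hdep
  set S : Finset (Fin (d+1)) := Finset.univ.filter (fun i => g i ≠ 0) with hS
  have hSne : S.Nonempty := ⟨i₀, by simp [hS, hgi₀]⟩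
  set m' : Fin (d+1) := S.max' hSne with hm'
  have hgm' : g m' ≠ 0 := by
    have := S.max'_mem hSne
    simp [hS] at this
    exact this
  have hleS : ∀ i ∈ S, (i:ℕ) ≤ (m':ℕ) := fun i hi => S.le_max' i hi
  set m : ℕ := (m' : ℕ) with hmdef
  have hmd : m ≤ d := Fin.is_le m'
  have hm1 : 1 ≤ m := by
    by_contra hm0
    have hm0' : (m' : ℕ) = 0 := by omega
    have hsingle : ∑ i, g i • W i = g m' • W m' := by
      apply Finset.sum_eq_single_of_mem m' (Finset.mem_univ m')
      intro b _ hb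
      have : g b = 0 := by
        by_contra hgb
        have hbS : b ∈ S := by simp [hS, hgb]
        have := hleS b hbS
        exact hb (Fin.ext (by omega))
      rw [this, zero_smul]
    rw [hsingle] at hgsum
    have hWm' : W m' = v := by
      rw [hW]
      simp only [hm0']
      rw [h0 0, Phi_zero]
      rfl
    rw [hWm'] at hgsum
    exact hv0 ((smul_eq_zero.mp hgsum).resolve_left hgm')
  -- key identity
  have hkey : ∀ k : ℤ, 0 ≤ k →
      (∑ i : Fin (d+1), g i * (((-1:ℝ)^(i:ℕ)) * (k.toNat.choose (i:ℕ) : ℝ))) • x 0 k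
        = - ∑ i : Fin (d+1), g i • E (i:ℕ) k := by
    intro k hk
    have h1 : Phi A k 0 (∑ i : Fin (d+1), g i • W i) = 0 := by rw [hgsum, map_zero]
    rw [map_sum] at h1
    have h2 : ∀ i : Fin (d+1),
        Phi A k 0 (g i • W i)
          = g i • ((((-1:ℝ)^(i:ℕ)) * (k.toNat.choose (i:ℕ) : ℝ)) • x 0 k) + g i • E (i:ℕ) k := by
      intro i
      rw [map_smul]
      have : Phi A k 0 (W i) = (((-1:ℝ)^(i:ℕ)) * (k.toNat.choose (i:ℕ) : ℝ)) • x 0 k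
          + E (i:ℕ) k := by
        rw [hE]
        simp only [hW]
        abel
      rw [this, smul_add]
    rw [Finset.sum_congr rfl (fun i _ => h2 i), Finset.sum_add_distrib] at h1
    have h3 : ∑ i : Fin (d+1), g i • ((((-1:ℝ)^(i:ℕ)) * (k.toNat.choose (i:ℕ) : ℝ)) • x 0 k)
        = (∑ i : Fin (d+1), g i * (((-1:ℝ)^(i:ℕ)) * (k.toNat.choose (i:ℕ) : ℝ))) • x 0 k := by
      rw [Finset.sum_smul]
      apply Finset.sum_congr rfl
      intro i _
      rw [smul_smul]
    rw [h3] at h1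
    rw [eq_neg_iff_add_eq_zero]
    exact h1
  -- norm inequality
  set a : ℝ := |g m'| with ha
  have ha0 : 0 < a := abs_pos.mpr hgm'
  set GA : ℝ := ∑ i : Fin (d+1), |g i| with hGA
  have hGAnn : 0 ≤ GA := Finset.sum_nonneg (fun i _ => abs_nonneg _)
  set K' : ℝ := GA * ((d:ℝ) * CM) with hK'
  have hK'nn : 0 ≤ K' := mul_nonneg hGAnn (mul_nonneg (Nat.cast_nonneg d) hCMnn)
  set P : ℝ := a / (2^m * (m.factorial : ℝ)) with hP
  have hP0 : 0 < P := by
    apply div_pos ha0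
    positivity
  -- the eventual bound
  have hbound : ∀ k : ℤ, 0 ≤ k →
      (2*(m:ℝ) ≤ (k.toNat:ℝ)) → (2*GA/P ≤ (k.toNat:ℝ)) →
      ‖Phi A k 0 v‖ ≤ (2*K'/P) / ((k.toNat:ℝ)+1) := by
    intro k hk hk1 hk2
    set n := k.toNat with hn
    set t : ℝ := (n:ℝ) + 1 with ht
    have ht1 : (1:ℝ) ≤ t := by rw [ht]; linarith [Nat.cast_nonneg (α := ℝ) n]
    have ht0 : (0:ℝ) < t := lt_of_lt_of_le one_pos ht1
    have htm : 2*(m:ℝ) ≤ t := by rw [ht]; linarith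
    -- lower bound of the binomial coefficient
    have hmn : m ≤ n := by
      have h5 : (m:ℝ) ≤ (n:ℝ) := by linarith [Nat.cast_nonneg (α := ℝ) m]
      exact_mod_cast h5
    have hchoose : t^m / (2^m * (m.factorial:ℝ)) ≤ (n.choose m : ℝ) := by
      have h1 := Nat.pow_le_choose (α := ℝ) m n
      have h2 : ((n + 1 - m : ℕ) : ℝ) = t - m := by
        rw [ht]
        have : ((n + 1 - m : ℕ) : ℝ) = ((n+1:ℕ):ℝ) - (m:ℝ) := by
          rw [Nat.cast_sub (by omega)]
        rw [this]
        push_cast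
        ring
      have h3 : (t/2)^m ≤ (((n + 1 - m : ℕ) : ℝ))^m := by
        apply pow_le_pow_left₀ (by positivity)
        rw [h2]
        linarith
      calc t^m / (2^m * (m.factorial:ℝ)) = (t/2)^m / (m.factorial:ℝ) := by
            rw [div_pow, div_div]
        _ ≤ (((n + 1 - m : ℕ) : ℝ))^m / (m.factorial:ℝ) :=
            (div_le_div_iff_of_pos_right (by positivity : (0:ℝ) < (m.factorial:ℝ))).mpr h3
        _ ≤ (n.choose m : ℝ) := h1
    have h1 := hkey k hk
    rw [← hn] at h1
    set c : ℝ := ∑ i : Fin (d+1), g i * (((-1:ℝ)^(i:ℕ)) * (n.choose (i:ℕ) : ℝ)) with hc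
    -- upper bound on the error sum
    have hRHS : ‖∑ i : Fin (d+1), g i • E (i:ℕ) k‖ ≤ K' * t^(m-1) := by
      calc ‖∑ i : Fin (d+1), g i • E (i:ℕ) k‖ ≤ ∑ i : Fin (d+1), ‖g i • E (i:ℕ) k‖ :=
            norm_sum_le _ _
        _ ≤ ∑ i : Fin (d+1), |g i| * ((d:ℝ)*CM * t^(m-1)) := by
            apply Finset.sum_le_sum
            intro i _
            rw [norm_smul, Real.norm_eq_abs]
            by_cases hgi : g i = 0
            · simp [hgi]
            · have hiS : i ∈ S := by simp [hS, hgi]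
              have him : (i:ℕ) ≤ m := hleS i hiS
              apply mul_le_mul_of_nonneg_left _ (abs_nonneg _)
              calc ‖E (i:ℕ) k‖ ≤ (d:ℝ)*CM * t^((i:ℕ)-1) := hErr (i:ℕ) (Fin.is_le i) k hk
                _ ≤ (d:ℝ)*CM * t^(m-1) := by
                    apply mul_le_mul_of_nonneg_left _ (by positivity)
                    apply pow_le_pow_right₀ ht1 (by omega)
        _ = K' * t^(m-1) := by
            rw [← Finset.sum_mul, hK', hGA]
            ring
    -- lower bound on the coefficient
    have hclow : P/2 * t^m ≤ |c| := by
      have hsplit : c = (∑ i ∈ Finset.univ.erase m', g i * (((-1:ℝ)^(i:ℕ)) * (n.choose (i:ℕ) : ℝ)))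
          + g m' * (((-1:ℝ)^m) * (n.choose m : ℝ)) := by
        rw [hc, ← Finset.sum_erase_add Finset.univ _ (Finset.mem_univ m')]
      have habs2 : |g m' * (((-1:ℝ)^m) * (n.choose m : ℝ))| = a * (n.choose m : ℝ) := by
        rw [abs_mul, abs_mul, abs_pow, abs_neg, abs_one, one_pow, one_mul, ha,
          abs_of_nonneg (by positivity : (0:ℝ) ≤ (n.choose m : ℝ))]
      have habs1 : |∑ i ∈ Finset.univ.erase m', g i * (((-1:ℝ)^(i:ℕ)) * (n.choose (i:ℕ) : ℝ))|
          ≤ GA * t^(m-1) := by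
        calc |∑ i ∈ Finset.univ.erase m', g i * (((-1:ℝ)^(i:ℕ)) * (n.choose (i:ℕ) : ℝ))|
            ≤ ∑ i ∈ Finset.univ.erase m', |g i * (((-1:ℝ)^(i:ℕ)) * (n.choose (i:ℕ) : ℝ))| :=
              Finset.abs_sum_le_sum_abs _ _
          _ ≤ ∑ i ∈ Finset.univ.erase m', |g i| * t^(m-1) := by
              apply Finset.sum_le_sum
              intro i hi
              rw [abs_mul, abs_mul, abs_pow, abs_neg, abs_one, one_pow, one_mul,
                abs_of_nonneg (by positivity : (0:ℝ) ≤ (n.choose (i:ℕ) : ℝ))]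
              by_cases hgi : g i = 0
              · simp [hgi]
              · have hiS : i ∈ S := by simp [hS, hgi]
                have him : (i:ℕ) ≤ m := hleS i hiS
                have hine : i ≠ m' := (Finset.mem_erase.mp hi).1
                have hilt : (i:ℕ) < m := by
                  rcases lt_or_eq_of_le him with h | h
                  · exact h
                  · exact absurd (Fin.ext h) hine
                apply mul_le_mul_of_nonneg_left _ (abs_nonneg _)
                calc (n.choose (i:ℕ) : ℝ) ≤ ((n:ℝ))^(i:ℕ) := by
                      exact_mod_cast Nat.choose_le_pow n (i:ℕ)
                  _ ≤ t^(i:ℕ) := by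
                      apply pow_le_pow_left₀ (Nat.cast_nonneg n)
                      rw [ht]; linarith
                  _ ≤ t^(m-1) := pow_le_pow_right₀ ht1 (by omega)
          _ ≤ GA * t^(m-1) := by
              rw [← Finset.sum_mul]
              apply mul_le_mul_of_nonneg_right _ (by positivity)
              rw [hGA]
              exact Finset.sum_le_sum_of_subset_of_nonneg (Finset.erase_subset _ _)
                (fun i _ _ => abs_nonneg _)
      have h2 : a * (n.choose m : ℝ) - GA * t^(m-1) ≤ |c| := by
        rw [hsplit]
        have := abs_add_le (∑ i ∈ Finset.univ.erase m',
          g i * (((-1:ℝ)^(i:ℕ)) * (n.choose (i:ℕ) : ℝ))) (g m' * (((-1:ℝ)^m) * (n.choose m : ℝ)))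
        have h3 := abs_sub_abs_le_abs_sub (g m' * (((-1:ℝ)^m) * (n.choose m : ℝ)))
          (-(∑ i ∈ Finset.univ.erase m', g i * (((-1:ℝ)^(i:ℕ)) * (n.choose (i:ℕ) : ℝ))))
        rw [abs_neg, sub_neg_eq_add, habs2] at h3
        rw [add_comm]
        linarith [h3]
      have h4 : P * t^m - GA * t^(m-1) ≤ a * (n.choose m : ℝ) - GA * t^(m-1) := by
        have : P * t^m ≤ a * (n.choose m : ℝ) := by
          have h12 : P * t^m = a * (t^m / (2^m * (m.factorial:ℝ))) := by
            rw [hP]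
            field_simp
          rw [h12]
          exact mul_le_mul_of_nonneg_left hchoose (le_of_lt ha0)
        linarith
      have h5 : P/2 * t^m ≤ P * t^m - GA * t^(m-1) := by
        have htm0 : t^m = t^(m-1) * t := by
          rw [← pow_succ]
          congr 1
          omega
        rw [htm0]
        have h6 : GA ≤ P/2 * t := by
          rw [div_mul_eq_mul_div, le_div_iff₀ (by norm_num : (0:ℝ) < 2)]
          have h7 : 2*GA/P ≤ t := by rw [ht]; linarith
          rw [div_le_iff₀ hP0] at h7
          linarith
        have h8 : (0:ℝ) ≤ t^(m-1) := by positivity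
        nlinarith
      linarith
    -- combine
    have hcomb : P/2 * t^m * ‖x 0 k‖ ≤ K' * t^(m-1) := by
      have h9 : |c| * ‖x 0 k‖ = ‖∑ i : Fin (d+1), g i • E (i:ℕ) k‖ := by
        rw [← Real.norm_eq_abs, ← norm_smul, h1, norm_neg]
      have h10 : |c| * ‖x 0 k‖ ≤ K' * t^(m-1) := by rw [h9]; exact hRHS
      have h11 : P/2 * t^m * ‖x 0 k‖ ≤ |c| * ‖x 0 k‖ :=
        mul_le_mul_of_nonneg_right hclow (norm_nonneg _)
      linarith
    have hxv : x 0 k = Phi A k 0 v := h0 k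
    rw [← hxv]
    have ht0' : (0:ℝ) < P/2 * t^m := by positivity
    rw [← le_div_iff₀' ht0'] at hcomb
    calc ‖x 0 k‖ ≤ K' * t^(m-1) / (P/2 * t^m) := hcomb
      _ = (2*K'/P) / t := by
          have htm0 : t^m = t^(m-1) * t := by
            rw [← pow_succ]
            congr 1
            omega
          rw [htm0]
          field_simp
  -- final squeeze
  have htoNat : Tendsto (fun k : ℤ => ((k.toNat:ℝ) + 1)) atTop atTop := by
    apply tendsto_atTop_mono (fun k : ℤ => ?_) tendsto_intCast_atTop_atTop
    have h1 : (k : ℤ) ≤ (k.toNat : ℤ) := Int.self_le_toNat k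
    have h2 : ((k:ℤ):ℝ) ≤ ((k.toNat:ℤ):ℝ) := Int.cast_le.mpr h1
    push_cast at h2 ⊢
    linarith
  have hlim : Tendsto (fun k : ℤ => (2*K'/P) / ((k.toNat:ℝ) + 1)) atTop (𝓝 0) :=
    Tendsto.div_atTop tendsto_const_nhds htoNat
  apply squeeze_zero' (Eventually.of_forall (fun k => norm_nonneg _)) _ hlim
  have hev : ∀ᶠ k : ℤ in atTop,
      0 ≤ k ∧ 2*(m:ℝ) ≤ (k.toNat:ℝ) ∧ 2*GA/P ≤ (k.toNat:ℝ) := by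
    have hT1 : ∀ᶠ k : ℤ in atTop, (⌈(2*(m:ℝ))⌉ : ℤ) ≤ k := eventually_ge_atTop _
    have hT2 : ∀ᶠ k : ℤ in atTop, (⌈(2*GA/P : ℝ)⌉ : ℤ) ≤ k := eventually_ge_atTop _
    have hT0 : ∀ᶠ k : ℤ in atTop, (0:ℤ) ≤ k := eventually_ge_atTop _
    filter_upwards [hT0, hT1, hT2] with k hk0 hk1 hk2
    have hkt : (k:ℝ) ≤ (k.toNat:ℝ) := by
      have h1 : (k : ℤ) ≤ (k.toNat : ℤ) := Int.self_le_toNat k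
      exact_mod_cast Int.cast_le.mpr h1
    refine ⟨hk0, ?_, ?_⟩
    · have := (Int.le_ceil (2*(m:ℝ))).trans (Int.cast_le.mpr hk1)
      linarith
    · have := (Int.le_ceil (2*GA/P : ℝ)).trans (Int.cast_le.mpr hk2)
      linarith
  filter_upwards [hev] with k hk
  exact hbound k hk.1 hk.2.1 hk.2.2

/-- Perron property B_ω(ℤ) implies transversality of B^+(𝒜) and B^−(𝒜). -/
theorem perron_implies_transverse (d : ℕ) (hd : 1 ≤ d) (ω M : ℝ) (hω : 0 ≤ ω) (hM : 0 < M)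
    (A : ℤ → (Ed d ≃L[ℝ] Ed d))
    (hA : ∀ k : ℤ, ‖(A k : Ed d →L[ℝ] Ed d)‖ ≤ M ∧
      ‖((A k).symm : Ed d →L[ℝ] Ed d)‖ ≤ M)
    (hperron : PerronBZ ω A) :
    ∀ u : Ed d, ∃ v ∈ Bplus A, ∃ w ∈ Bminus A, u = v + w := by
  intro u
  set f : ℤ → Ed d := fun k => if k = 1 then A 0 u else 0 with hf
  have hfb : ∃ C : ℝ, ∀ k : ℤ, ‖f k‖ * wt ω k ≤ C := by
    refine ⟨‖A 0 u‖ * wt ω 1, fun k => ?_⟩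
    have hfk : f k = if k = 1 then A 0 u else 0 := rfl
    rcases eq_or_ne k 1 with h | h
    · rw [hfk, if_pos h, h]
    · rw [hfk, if_neg h]
      simp only [norm_zero, zero_mul]
      exact mul_nonneg (norm_nonneg _) (le_of_lt (wt_pos 1))
  obtain ⟨x, ⟨Cx, hCx⟩, hsol⟩ := hperron f hfb
  set v : Ed d := x 0 + u with hv
  set w : Ed d := -x 0 with hw
  -- forward part
  set z : ℤ → Ed d := fun k => if k = 0 then v else x k with hz
  have hzrec : ∀ k : ℤ, 0 ≤ k → z (k+1) = A k (z k) := by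
    intro k hk
    have hz1 : z (k+1) = x (k+1) := by
      show (if k+1 = 0 then v else x (k+1)) = x (k+1)
      rw [if_neg (by omega)]
    rcases eq_or_ne k 0 with h | h
    · subst h
      rw [hz1, hsol 0]
      have : f (0+1) = A 0 u := by
        show (if (0:ℤ)+1 = 1 then A 0 u else 0) = A 0 u
        norm_num
      rw [this]
      show A 0 (x 0) + A 0 u = A 0 (z 0)
      have : z 0 = v := by show (if (0:ℤ) = 0 then v else x 0) = v; norm_num
      rw [this, hv, map_add]
    · have hzk : z k = x k := by
        show (if k = 0 then v else x k) = x k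
        rw [if_neg h]
      rw [hz1, hzk, hsol k]
      have : f (k+1) = 0 := by
        show (if k+1 = 1 then A 0 u else 0) = 0
        rw [if_neg (by omega)]
      rw [this, add_zero]
  have hzfor : ∀ k : ℤ, 0 ≤ k → z k = Phi A k 0 v := by
    have h1 := Phi_hom_forward A hzrec
    have hz0 : z 0 = v := by show (if (0:ℤ) = 0 then v else x 0) = v; norm_num
    intro k hk
    rw [h1 k hk, hz0]
  have hvbd : ∀ k : ℤ, 0 ≤ k → ‖Phi A k 0 v‖ * wt ω k ≤ max Cx (‖v‖ * wt ω 0) := by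
    intro k hk
    rcases eq_or_ne k 0 with h | h
    · subst h
      rw [Phi_zero]
      exact le_max_right _ _
    · have : Phi A k 0 v = x k := by
        rw [← hzfor k hk]
        simp only [hz]
        rw [if_neg h]
      rw [this]
      exact le_trans (hCx k) (le_max_left _ _)
  have hvB : v ∈ Bplus A :=
    forward_decay A hω hperron v _ hvbd
  -- backward part
  have hxneg : ∀ k : ℤ, k ≤ 0 → x k = Phi A k 0 (x 0) := by
    apply Phi_hom_backward
    intro k hk
    rw [hsol k]
    have : f (k+1) = 0 := by
      show (if k+1 = 1 then A 0 u else 0) = 0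
      rw [if_neg (by omega)]
    rw [this, add_zero]
  set B : ℤ → (Ed d ≃L[ℝ] Ed d) := fun j => (A (-j-1)).symm with hB
  have hBA : ∀ k : ℤ, ‖(B k : Ed d →L[ℝ] Ed d)‖ ≤ M ∧
      ‖((B k).symm : Ed d →L[ℝ] Ed d)‖ ≤ M := by
    intro k
    constructor
    · exact (hA (-k-1)).2
    · have : (B k).symm = A (-k-1) := by
        rw [hB]
        exact ContinuousLinearEquiv.symm_symm _
      rw [this]
      exact (hA (-k-1)).1
  have hperronB : PerronBZ ω B := PerronBZ_reverse A hω hM hA hperron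
  have hwbd : ∀ k : ℤ, 0 ≤ k → ‖Phi B k 0 w‖ * wt ω k ≤ Cx := by
    intro k hk
    have hk' : ((k.toNat : ℤ)) = k := Int.toNat_of_nonneg hk
    have h1 : Phi B k 0 w = Phi A (-k) 0 w := by
      rw [← hk']
      exact Phi_reverse A k.toNat w
    have h2 : Phi A (-k) 0 w = - x (-k) := by
      rw [hw, map_neg, ← hxneg (-k) (by omega)]
    rw [h1, h2, norm_neg, ← wt_neg ω k]
    exact hCx (-k)
  have hwdecay : Tendsto (fun k : ℤ => ‖Phi B k 0 w‖) atTop (𝓝 0) :=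
    forward_decay B hω hperronB w _ hwbd
  have hwB : w ∈ Bminus A := by
    have hneg : Tendsto (fun k : ℤ => -k) atBot atTop := tendsto_neg_atBot_atTop
    have h3 : Tendsto (fun k : ℤ => ‖Phi B (-k) 0 w‖) atBot (𝓝 0) := hwdecay.comp hneg
    have h4 : ∀ᶠ k : ℤ in atBot, ‖Phi B (-k) 0 w‖ = ‖Phi A k 0 w‖ := by
      filter_upwards [eventually_le_atBot (0:ℤ)] with k hk
      have hk' : (((-k).toNat : ℤ)) = -k := Int.toNat_of_nonneg (by omega)
      have h5 : Phi B (-k) 0 w = Phi A k 0 w := by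
        rw [← hk']
        have := Phi_reverse A (-k).toNat w
        rw [this, hk']
        norm_num
      rw [h5]
    exact (Tendsto.congr' h4 h3 : _)
  exact ⟨v, hvB, w, hwB, by rw [hv, hw]; abel⟩
end
end

section
/- Let d ≥ 1, γ ≥ 0, and let (A_k)_{k∈ℤ} be a sequence of linear isomorphisms of ℝ^d. Let (w_k)_{k∈ℤ} be a sequence of vectors in ℝ^d with ‖(w_k)‖_γ < ∞. Suppose there is a constant Q > 0 such that for every integer N > 0 there exists a finite sequence (v^N_k)_{k=−N,…,N} of vectors in ℝ^d satisfying v^N_{k+1} = A_k v^N_k + w_{k+1} for all −N ≤ k ≤ N−1 and |v^N_k|(|k|+1)^γ ≤ Q for all −N ≤ k ≤ N. Then there exists a sequence (v_k)_{k∈ℤ} such that v_{k+1} = A_k v_k + w_{k+1} for every k ∈ ℤ and ‖(v_k)‖_γ ≤ Q. -/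
noncomputable section

open Filter Topology

variable {d : ℕ}

noncomputable def fwd (A : ℤ → (Ed d ≃L[ℝ] Ed d)) (w : ℤ → Ed d) (x : Ed d) : ℕ → Ed d
  | 0 => x
  | n + 1 => A (n : ℤ) (fwd A w x n) + w ((n : ℤ) + 1)

noncomputable def bwd (A : ℤ → (Ed d ≃L[ℝ] Ed d)) (w : ℤ → Ed d) (x : Ed d) : ℕ → Ed d
  | 0 => x
  | n + 1 => (A (-((n : ℤ) + 1))).symm (bwd A w x n - w (-(n : ℤ)))

noncomputable def sol (A : ℤ → (Ed d ≃L[ℝ] Ed d)) (w : ℤ → Ed d) (x : Ed d) (k : ℤ) : Ed d :=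
  if 0 ≤ k then fwd A w x k.toNat else bwd A w x (-k).toNat

lemma sol_nonneg {A : ℤ → (Ed d ≃L[ℝ] Ed d)} {w : ℤ → Ed d} {x : Ed d} {k : ℤ} (hk : 0 ≤ k) :
    sol A w x k = fwd A w x k.toNat := if_pos hk

lemma sol_nonpos {A : ℤ → (Ed d ≃L[ℝ] Ed d)} {w : ℤ → Ed d} {x : Ed d} {k : ℤ} (hk : k ≤ 0) :
    sol A w x k = bwd A w x (-k).toNat := by
  rcases eq_or_lt_of_le hk with h | h
  · subst h; simp [sol, fwd, bwd]
  · exact if_neg (not_le.mpr h)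

lemma sol_rec (A : ℤ → (Ed d ≃L[ℝ] Ed d)) (w : ℤ → Ed d) (x : Ed d) (k : ℤ) :
    sol A w x (k + 1) = A k (sol A w x k) + w (k + 1) := by
  rcases le_or_gt 0 k with hk | hk
  · rw [sol_nonneg (by omega), sol_nonneg hk]
    have h1 : (k + 1).toNat = k.toNat + 1 := by omega
    rw [h1]
    have h2 : ((k.toNat : ℤ)) = k := Int.toNat_of_nonneg hk
    simp [fwd, h2]
  · set n := (-(k + 1)).toNat with hn
    have hk1 : k + 1 = -(n : ℤ) := by omega
    have hkn : (-k).toNat = n + 1 := by omega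
    have hknz : k = -((n : ℤ) + 1) := by omega
    rw [sol_nonpos (by omega), sol_nonpos (by omega), hkn]
    have : bwd A w x (n + 1) = (A (-((n : ℤ) + 1))).symm (bwd A w x n - w (-(n : ℤ))) := rfl
    rw [this, ← hknz, ← hk1]
    have h4 : (-(k+1)).toNat = n := rfl
    rw [show ((-(k+1)).toNat) = n from rfl]
    rw [ContinuousLinearEquiv.apply_symm_apply]
    abel

lemma sol_cont (A : ℤ → (Ed d ≃L[ℝ] Ed d)) (w : ℤ → Ed d) (k : ℤ) :
    Continuous (fun x => sol A w x k) := by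
  have hf : ∀ n : ℕ, Continuous (fun x => fwd A w x n) := by
    intro n
    induction n with
    | zero => exact continuous_id
    | succ n ih => exact ((A n).continuous.comp ih).add continuous_const
  have hb : ∀ n : ℕ, Continuous (fun x => bwd A w x n) := by
    intro n
    induction n with
    | zero => exact continuous_id
    | succ n ih => exact (A (-((n:ℤ)+1))).symm.continuous.comp (ih.sub continuous_const)
  unfold sol
  split
  · exact hf _
  · exact hb _

lemma sol_unique (A : ℤ → (Ed d ≃L[ℝ] Ed d)) (w : ℤ → Ed d) {v : ℤ → Ed d} {N : ℕ}
    (hrec : ∀ k : ℤ, -(N : ℤ) ≤ k → k ≤ (N : ℤ) - 1 → v (k + 1) = A k (v k) + w (k + 1)) :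
    ∀ k : ℤ, -(N : ℤ) ≤ k → k ≤ (N : ℤ) → v k = sol A w (v 0) k := by
  have Hf : ∀ n : ℕ, (n : ℤ) ≤ N → v (n : ℤ) = fwd A w (v 0) n := by
    intro n
    induction n with
    | zero => intro _; rfl
    | succ n ih =>
      intro hn
      have hv : v ((n : ℤ) + 1) = A (n : ℤ) (v (n : ℤ)) + w ((n : ℤ) + 1) :=
        hrec n (by omega) (by push_cast at hn ⊢; omega)
      have : ((n + 1 : ℕ) : ℤ) = (n : ℤ) + 1 := by push_cast; ring
      rw [this, hv, ih (by push_cast at hn ⊢; omega)]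
      rfl
  have Hb : ∀ n : ℕ, (n : ℤ) ≤ N → v (-(n : ℤ)) = bwd A w (v 0) n := by
    intro n
    induction n with
    | zero => intro _; exact congrArg v (by norm_num)
    | succ n ih =>
      intro hn
      have hn' : ((n + 1 : ℕ) : ℤ) = (n : ℤ) + 1 := by push_cast; ring
      have hv : v (-((n : ℤ) + 1) + 1) = A (-((n : ℤ) + 1)) (v (-((n : ℤ) + 1))) + w (-((n : ℤ) + 1) + 1) :=
        hrec (-((n : ℤ) + 1)) (by push_cast at hn ⊢; omega) (by omega)
      have heq : -((n:ℤ) + 1) + 1 = -(n : ℤ) := by ring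
      rw [heq] at hv
      have : v (-((n : ℤ) + 1)) = (A (-((n : ℤ) + 1))).symm (v (-(n:ℤ)) - w (-(n:ℤ))) := by
        rw [hv]; simp
      rw [show (-((n+1:ℕ):ℤ)) = -((n:ℤ)+1) from by push_cast; ring, this]
      rw [ih (by push_cast at hn ⊢; omega)]
      rfl
  intro k hk1 hk2
  rcases le_or_gt 0 k with hk | hk
  · rw [sol_nonneg hk, ← Hf k.toNat (by rw [Int.toNat_of_nonneg hk]; omega)]
    exact congrArg v (Int.toNat_of_nonneg hk).symm
  · rw [sol_nonpos (le_of_lt hk), ← Hb (-k).toNat (by rw [Int.toNat_of_nonneg (by omega)]; omega)]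
    exact congrArg v (by rw [Int.toNat_of_nonneg (by omega : (0:ℤ) ≤ -k)]; ring)

/-- STATEMENT 9 proof -/
theorem finite_bounded_to_infinite_bounded (d : ℕ) (hd : 1 ≤ d) (γ : ℝ) (hγ : 0 ≤ γ)
    (A : ℤ → (Ed d ≃L[ℝ] Ed d)) (w : ℤ → Ed d)
    (hw : ∃ C : ℝ, ∀ k : ℤ, ‖w k‖ * wt γ k ≤ C)
    (Q : ℝ) (hQ : 0 < Q)
    (hfin : ∀ N : ℕ, 0 < N → ∃ v : ℤ → Ed d,
      (∀ k : ℤ, -(N : ℤ) ≤ k → k ≤ (N : ℤ) - 1 → v (k + 1) = A k (v k) + w (k + 1)) ∧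
      (∀ k : ℤ, -(N : ℤ) ≤ k → k ≤ (N : ℤ) → ‖v k‖ * wt γ k ≤ Q)) :
    ∃ v : ℤ → Ed d, (∀ k : ℤ, v (k + 1) = A k (v k) + w (k + 1)) ∧
      ∀ k : ℤ, ‖v k‖ * wt γ k ≤ Q := by

  classical
  set F : ℕ → (ℤ → Ed d) := fun N => (hfin (N + 1) N.succ_pos).choose with hF
  have hrecF : ∀ N : ℕ, ∀ k : ℤ, -((N + 1 : ℕ) : ℤ) ≤ k → k ≤ ((N + 1 : ℕ) : ℤ) - 1 →
      F N (k + 1) = A k (F N k) + w (k + 1) :=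
    fun N => (hfin (N + 1) N.succ_pos).choose_spec.1
  have hbdF : ∀ N : ℕ, ∀ k : ℤ, -((N + 1 : ℕ) : ℤ) ≤ k → k ≤ ((N + 1 : ℕ) : ℤ) →
      ‖F N k‖ * wt γ k ≤ Q :=
    fun N => (hfin (N + 1) N.succ_pos).choose_spec.2
  have hwt0 : wt γ (0 : ℤ) = 1 := by simp [wt]
  have hu : ∀ N : ℕ, F N 0 ∈ Metric.closedBall (0 : Ed d) Q := by
    intro N
    have h := hbdF N 0 (by push_cast; omega) (by push_cast; omega)
    rw [hwt0, mul_one] at h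
    simpa [Metric.mem_closedBall, dist_zero_right] using h
  obtain ⟨x0, -, φ, hφ, hlim⟩ :=
    (isCompact_closedBall (0 : Ed d) Q).tendsto_subseq hu
  refine ⟨sol A w x0, sol_rec A w x0, fun k => ?_⟩
  have h1 : Tendsto (fun n => sol A w (F (φ n) 0) k) atTop (𝓝 (sol A w x0 k)) :=
    ((sol_cont A w k).tendsto x0).comp hlim
  have h2 : Tendsto (fun n => ‖sol A w (F (φ n) 0) k‖ * wt γ k) atTop
      (𝓝 (‖sol A w x0 k‖ * wt γ k)) := h1.norm.mul_const _
  refine le_of_tendsto h2 ?_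
  filter_upwards [eventually_ge_atTop k.natAbs] with n hn
  have hφn : k.natAbs ≤ φ n := hn.trans hφ.le_apply
  have hb1 : -((φ n + 1 : ℕ) : ℤ) ≤ k := by omega
  have hb2 : k ≤ ((φ n + 1 : ℕ) : ℤ) := by omega
  have heq : F (φ n) k = sol A w (F (φ n) 0) k :=
    sol_unique A w (hrecF (φ n)) k hb1 hb2
  rw [← heq]
  exact hbdF (φ n) k hb1 hb2
end
end

section
/- Let d ≥ 1, ω ≥ 0, and let 𝒜 = (A_k)_{k∈ℤ+} be a sequence of linear isomorphisms of ℝ^d that is hyperbolic on ℤ+ with constants K > 0, λ ∈ (0,1) and projections P_k, Q_k. Then there exists a constant C > 0, depending only on K, λ and ω, such that for every f ∈ N_ω(ℤ+) with f_0 = 0 the sequence x_k = Σ_{u=0}^{k} Φ_{k,u} P_u f_u − Σ_{u=k+1}^{∞} Φ_{k,u} Q_u f_u is well defined (the second series converges absolutely), satisfies x_{k+1} = A_k x_k + f_{k+1} for all k ≥ 0, and ‖x‖_ω ≤ C‖f‖_ω. -/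
noncomputable section

open Filter Topology

section Aux

lemma phiNat_succ_left {d : ℕ} (A : ℤ → (Ed d ≃L[ℝ] Ed d)) (l : ℤ) (n : ℕ) (v : Ed d) :
    PhiNat A l (n+1) v = PhiNat A (l+1) n (A l v) := by
  induction n with
  | zero => simp [PhiNat]
  | succ n ih =>
    have h1 : PhiNat A l (n+2) v = A (l + (n+1 : ℕ)) (PhiNat A l (n+1) v) := rfl
    have h2 : PhiNat A (l+1) (n+1) (A l v) = A (l+1 + (n:ℕ)) (PhiNat A (l+1) n (A l v)) := rfl
    rw [h1, h2, ih]
    congr 2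
    push_cast; ring

lemma phi_refl {d : ℕ} (A : ℤ → (Ed d ≃L[ℝ] Ed d)) (k : ℤ) (v : Ed d) :
    Phi A k k v = v := by
  simp [Phi, PhiNat]

lemma phi_succ {d : ℕ} (A : ℤ → (Ed d ≃L[ℝ] Ed d)) (k l : ℤ) (v : Ed d) :
    Phi A (k+1) l v = A k (Phi A k l v) := by
  rcases le_or_gt l k with h | h
  · rw [Phi, Phi, if_pos (by omega), if_pos h]
    have h1 : (k + 1 - l).toNat = (k - l).toNat + 1 := by omega
    rw [h1]
    have h2 : PhiNat A l ((k-l).toNat + 1) v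
        = A (l + ((k-l).toNat : ℕ)) (PhiNat A l (k-l).toNat v) := rfl
    rw [h2]
    congr 2
    omega
  rcases eq_or_lt_of_le (show k + 1 ≤ l from h) with h1 | h1
  · subst h1
    rw [Phi, Phi, if_pos le_rfl, if_neg (by omega)]
    have e0 : (k + 1 - (k+1)).toNat = 0 := by omega
    have e1 : (k + 1 - k).toNat = 1 := by omega
    rw [e0, e1]
    have hone : ∀ y : Ed d, PhiNat A k 1 y = A k y := by
      intro y
      show A (k + ((0:ℕ):ℤ)) y = A k y
      norm_num
    rw [← hone, ContinuousLinearEquiv.apply_symm_apply]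
    rfl
  · rw [Phi, Phi, if_neg (by omega), if_neg (by omega)]
    set n := (l - k - 1).toNat with hn
    have e1 : (l - (k+1)).toNat = n := by omega
    have e2 : (l - k).toNat = n + 1 := by omega
    rw [e1, e2]
    apply (PhiNat A (k+1) n).injective
    rw [ContinuousLinearEquiv.apply_symm_apply, ← phiNat_succ_left,
      ContinuousLinearEquiv.apply_symm_apply]

lemma sum_geom_rpow (ω lam : ℝ) (hl0 : 0 < lam) (hl1 : lam < 1) :
    Summable (fun m : ℕ => lam ^ m * ((m : ℝ) + 1) ^ ω) := by
  set N := ⌈ω⌉₊ with hN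
  have h0 : Summable (fun n : ℕ => (n:ℝ) ^ N * lam ^ n) :=
    summable_pow_mul_geometric_of_norm_lt_one N
      (by rw [Real.norm_eq_abs, abs_of_pos hl0]; exact hl1)
  have h1 : Summable (fun m : ℕ => ((m:ℝ)+1) ^ N * lam ^ (m+1)) := by
    have := h0.comp_injective Nat.succ_injective
    apply this.congr
    intro m
    simp [Function.comp, Nat.succ_eq_add_one]
  have h2 : Summable (fun m : ℕ => lam⁻¹ * (((m:ℝ)+1) ^ N * lam ^ (m+1))) := h1.mul_left _
  apply Summable.of_nonneg_of_le _ _ h2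
  · intro m
    have h : (0:ℝ) < ((m:ℝ)+1) ^ ω := Real.rpow_pos_of_pos (by positivity) _
    exact mul_nonneg (by positivity) h.le
  intro m
  have hm1 : (1:ℝ) ≤ (m:ℝ) + 1 := by have : (0:ℝ) ≤ m := Nat.cast_nonneg m; linarith
  have hNle : ((m:ℝ)+1) ^ ω ≤ ((m:ℝ)+1) ^ (N:ℝ) :=
    Real.rpow_le_rpow_of_exponent_le hm1 (Nat.le_ceil ω)
  rw [Real.rpow_natCast] at hNle
  calc lam ^ m * ((m:ℝ)+1) ^ ω ≤ lam ^ m * ((m:ℝ)+1) ^ N := by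
        apply mul_le_mul_of_nonneg_left hNle (by positivity)
    _ = lam⁻¹ * (((m:ℝ)+1) ^ N * lam ^ (m+1)) := by
        field_simp [pow_succ]; ring

end Aux

/-- for a hyperbolic sequence on ℤ+, the explicit series gives a solution with
norm bound `C‖f‖_ω`, where `C` depends only on `K`, `λ` and `ω`. -/
theorem hyperbolic_series_solution (ω K lam : ℝ) (hω : 0 ≤ ω) (hK : 0 < K)
    (hlam0 : 0 < lam) (hlam1 : lam < 1) :
    ∃ C : ℝ, 0 < C ∧
      ∀ (d : ℕ), 1 ≤ d →
        ∀ (A : ℤ → (Ed d ≃L[ℝ] Ed d)) (P Q : ℤ → (Ed d →L[ℝ] Ed d)),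
          HyperbolicOnWith A {k : ℤ | 0 ≤ k} K lam P Q →
          ∀ f : ℤ → Ed d, f 0 = 0 → ∀ Cf : ℝ, (∀ k : ℤ, 0 ≤ k → ‖f k‖ * wt ω k ≤ Cf) →
            (∀ k : ℤ, 0 ≤ k → Summable fun n : ℕ =>
              ‖(Phi A k (k + 1 + n)) (Q (k + 1 + n) (f (k + 1 + n)))‖) ∧
            (∀ k : ℤ, 0 ≤ k →
              (∑ u ∈ Finset.Icc (0 : ℤ) (k + 1), (Phi A (k + 1) u) (P u (f u))) -
                  (∑' n : ℕ, (Phi A (k + 1) (k + 2 + n)) (Q (k + 2 + n) (f (k + 2 + n)))) =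
                A k ((∑ u ∈ Finset.Icc (0 : ℤ) k, (Phi A k u) (P u (f u))) -
                  ∑' n : ℕ, (Phi A k (k + 1 + n)) (Q (k + 1 + n) (f (k + 1 + n)))) + f (k + 1)) ∧
            (∀ k : ℤ, 0 ≤ k →
              ‖(∑ u ∈ Finset.Icc (0 : ℤ) k, (Phi A k u) (P u (f u))) -
                  ∑' n : ℕ, (Phi A k (k + 1 + n)) (Q (k + 1 + n) (f (k + 1 + n)))‖ * wt ω k ≤
                C * Cf) := by
  have hg : Summable (fun m : ℕ => lam ^ m * ((m : ℝ) + 1) ^ ω) := sum_geom_rpow ω lam hlam0 hlam1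
  set S := ∑' m : ℕ, lam ^ m * ((m : ℝ) + 1) ^ ω with hSdef
  have hgnn : ∀ m : ℕ, 0 ≤ lam ^ m * ((m:ℝ)+1) ^ ω := fun m =>
    mul_nonneg (by positivity) (Real.rpow_nonneg (by positivity) _)
  have hS0 : 0 ≤ S := tsum_nonneg hgnn
  have hlam1' : (0:ℝ) < 1 - lam := by linarith
  have hCpos : 0 < K^2 * (S + 1/(1-lam)) := by
    apply mul_pos (by positivity)
    have : 0 < 1/(1-lam) := by positivity
    linarith
  refine ⟨K^2 * (S + 1/(1-lam)), hCpos, ?_⟩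
  intro d hd A P Q hyp f hf0 Cf hCf
  obtain ⟨-, -, -, hPQ, -, -, -, hPb, hQb, hnrm⟩ := hyp
  have hwt_pos : ∀ k : ℤ, 0 < wt ω k := fun k => Real.rpow_pos_of_pos (by positivity) _
  have hwt1 : ∀ k : ℤ, 1 ≤ wt ω k := fun k =>
    Real.one_le_rpow (le_add_of_nonneg_left (abs_nonneg _)) hω
  have hCf0 : 0 ≤ Cf := le_trans (mul_nonneg (norm_nonneg _) (hwt_pos 0).le) (hCf 0 le_rfl)
  have hfle : ∀ k : ℤ, 0 ≤ k → ‖f k‖ ≤ Cf := by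
    intro k hk
    have h1 := hCf k hk
    nlinarith [hwt1 k, norm_nonneg (f k)]
  have hwt_mono : ∀ j k : ℤ, 0 ≤ j → j ≤ k → wt ω j ≤ wt ω k := by
    intro j k hj hjk
    apply Real.rpow_le_rpow (by positivity) _ hω
    have h1 : |(j:ℝ)| = j := abs_of_nonneg (by exact_mod_cast hj)
    have h2 : |(k:ℝ)| = k := abs_of_nonneg (by exact_mod_cast (hj.trans hjk))
    rw [h1, h2]
    have : (j:ℝ) ≤ k := by exact_mod_cast hjk
    linarith
  have hterm : ∀ k : ℤ, 0 ≤ k → ∀ n : ℕ,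
      ‖Phi A k (k+1+n) (Q (k+1+n) (f (k+1+n)))‖ ≤ K^2 * lam^(n+1) * ‖f (k+1+n)‖ := by
    intro k hk n
    have hu : (0:ℤ) ≤ k + 1 + n := by omega
    have h1 := hQb (k+1+n) hu k hk (by omega) (Q (k+1+n) (f (k+1+n))) ⟨f (k+1+n), rfl⟩
    have e : (k+1+(n:ℤ) - k).toNat = n+1 := by omega
    rw [e] at h1
    have h2 : ‖Q (k+1+n) (f (k+1+n))‖ ≤ K * ‖f (k+1+n)‖ := by
      calc ‖Q (k+1+n) (f (k+1+n))‖ ≤ ‖Q (k+1+(n:ℤ))‖ * ‖f (k+1+n)‖ :=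
            ContinuousLinearMap.le_opNorm _ _
        _ ≤ K * ‖f (k+1+n)‖ := mul_le_mul_of_nonneg_right (hnrm _ hu).2 (norm_nonneg _)
    calc ‖Phi A k (k+1+n) (Q (k+1+n) (f (k+1+n)))‖
        ≤ K * lam^(n+1) * ‖Q (k+1+n) (f (k+1+n))‖ := h1
      _ ≤ K * lam^(n+1) * (K * ‖f (k+1+n)‖) :=
          mul_le_mul_of_nonneg_left h2 (by positivity)
      _ = K^2 * lam^(n+1) * ‖f (k+1+n)‖ := by ring
  have hsummN : ∀ k : ℤ, 0 ≤ k →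
      Summable (fun n : ℕ => ‖Phi A k (k+1+n) (Q (k+1+n) (f (k+1+n)))‖) := by
    intro k hk
    apply Summable.of_nonneg_of_le (fun n => norm_nonneg _) (fun n => ?_)
      ((summable_geometric_of_lt_one hlam0.le hlam1).mul_left (K^2 * Cf * lam))
    calc ‖Phi A k (k+1+n) (Q (k+1+n) (f (k+1+n)))‖
        ≤ K^2 * lam^(n+1) * ‖f (k+1+n)‖ := hterm k hk n
      _ ≤ K^2 * lam^(n+1) * Cf :=
          mul_le_mul_of_nonneg_left (hfle _ (by omega)) (by positivity)
      _ = K^2 * Cf * lam * lam^n := by rw [pow_succ]; ring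
  have hsummV : ∀ k : ℤ, 0 ≤ k →
      Summable (fun n : ℕ => Phi A k (k+1+n) (Q (k+1+n) (f (k+1+n)))) :=
    fun k hk => (hsummN k hk).of_norm
  refine ⟨hsummN, ?_, ?_⟩
  · -- recurrence
    intro k hk
    have hk1 : (0:ℤ) ≤ k + 1 := by omega
    have hmap : A k (∑' n : ℕ, Phi A k (k+1+n) (Q (k+1+n) (f (k+1+n))))
        = ∑' n : ℕ, A k (Phi A k (k+1+n) (Q (k+1+n) (f (k+1+n)))) :=
      (A k : Ed d →L[ℝ] Ed d).map_tsum (hsummV k hk)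
    have hs1 : Summable (fun n : ℕ => Phi A (k+1) (k+1+n) (Q (k+1+n) (f (k+1+n)))) := by
      apply Summable.congr
        ((hsummV k hk).map (A k : Ed d →L[ℝ] Ed d) (A k : Ed d →L[ℝ] Ed d).continuous)
      intro n
      exact (phi_succ A k (k+1+n) _).symm
    have hshift : ∑' n : ℕ, Phi A (k+1) (k+1+n) (Q (k+1+n) (f (k+1+n)))
        = Q (k+1) (f (k+1))
          + ∑' n : ℕ, Phi A (k+1) (k+2+n) (Q (k+2+n) (f (k+2+n))) := by
      rw [Summable.tsum_eq_zero_add hs1]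
      congr 1
      · simp only [Nat.cast_zero, add_zero]
        exact phi_refl A (k+1) _
      · apply tsum_congr
        intro n
        have e : (k:ℤ) + 1 + ((n+1 : ℕ) : ℤ) = k + 2 + (n:ℤ) := by push_cast; ring
        rw [e]
    have hAts : A k (∑' n : ℕ, Phi A k (k+1+n) (Q (k+1+n) (f (k+1+n))))
        = Q (k+1) (f (k+1))
          + ∑' n : ℕ, Phi A (k+1) (k+2+n) (Q (k+2+n) (f (k+2+n))) := by
      rw [hmap, ← hshift]
      exact tsum_congr fun n : ℕ => (phi_succ A k (k+1+n) _).symm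
    have hAsum : A k (∑ u ∈ Finset.Icc (0:ℤ) k, Phi A k u (P u (f u)))
        = ∑ u ∈ Finset.Icc (0:ℤ) k, Phi A (k+1) u (P u (f u)) := by
      rw [map_sum]
      exact Finset.sum_congr rfl fun u _ => (phi_succ A k u _).symm
    have hsum1 : ∑ u ∈ Finset.Icc (0:ℤ) (k+1), Phi A (k+1) u (P u (f u))
        = (∑ u ∈ Finset.Icc (0:ℤ) k, Phi A (k+1) u (P u (f u))) + P (k+1) (f (k+1)) := by
      have h : Finset.Icc (0:ℤ) (k+1) = insert (k+1) (Finset.Icc 0 k) := by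
        ext x; simp only [Finset.mem_Icc, Finset.mem_insert]; omega
      rw [h, Finset.sum_insert (by simp)]
      rw [phi_refl A (k+1) (P (k+1) (f (k+1)))]
      abel
    have hPQ1 : P (k+1) (f (k+1)) + Q (k+1) (f (k+1)) = f (k+1) := by
      have h := hPQ (k+1) hk1
      have h2 := DFunLike.congr_fun h (f (k+1))
      simpa using h2
    have halg : ∀ (a t pf qf ff : Ed d), pf + qf = ff →
        (a + pf) - t = (a - (qf + t)) + ff := by
      intro a t pf qf ff h
      rw [← h]; abel
    rw [map_sub, hAsum, hAts, hsum1]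
    exact halg _ _ _ _ _ hPQ1
  · -- norm bound
    intro k hk
    have hb1 : ‖∑ u ∈ Finset.Icc (0:ℤ) k, Phi A k u (P u (f u))‖ * wt ω k
        ≤ K^2 * Cf * S := by
      have step : ∀ u ∈ Finset.Icc (0:ℤ) k, ‖Phi A k u (P u (f u))‖ * wt ω k
          ≤ (K^2*Cf) * (lam^((k-u).toNat) * (((k-u).toNat : ℝ)+1)^ω) := by
        intro u hu
        rw [Finset.mem_Icc] at hu
        obtain ⟨hu0, hle⟩ := hu
        have h1 := hPb u hu0 k hk hle (P u (f u)) ⟨f u, rfl⟩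
        have hPn : ‖P u (f u)‖ ≤ K * ‖f u‖ := by
          calc ‖P u (f u)‖ ≤ ‖P u‖ * ‖f u‖ := ContinuousLinearMap.le_opNorm _ _
            _ ≤ K * ‖f u‖ := mul_le_mul_of_nonneg_right (hnrm _ hu0).1 (norm_nonneg _)
        have hwt : wt ω k ≤ wt ω u * (((k-u).toNat : ℝ)+1)^ω := by
          unfold wt
          rw [← Real.mul_rpow (by positivity) (by positivity)]
          apply Real.rpow_le_rpow (by positivity) _ hω
          have hu' : |(u:ℝ)| = u := abs_of_nonneg (by exact_mod_cast hu0)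
          have hk' : |(k:ℝ)| = k := abs_of_nonneg (by exact_mod_cast hk)
          have hm : (((k-u).toNat : ℝ)) = (k:ℝ) - u := by
            have h' : (((k-u).toNat : ℤ) : ℝ) = ((k - u : ℤ) : ℝ) := by
              norm_cast; omega
            push_cast at h' ⊢
            linarith
          rw [hu', hk', hm]
          have hu0' : (0:ℝ) ≤ u := by exact_mod_cast hu0
          have hku : (u:ℝ) ≤ k := by exact_mod_cast hle
          nlinarith
        have hfwt : ‖f u‖ * wt ω k ≤ Cf * (((k-u).toNat : ℝ)+1)^ω := by
          calc ‖f u‖ * wt ω k ≤ ‖f u‖ * (wt ω u * (((k-u).toNat : ℝ)+1)^ω) :=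
                mul_le_mul_of_nonneg_left hwt (norm_nonneg _)
            _ = (‖f u‖ * wt ω u) * (((k-u).toNat : ℝ)+1)^ω := by ring
            _ ≤ Cf * (((k-u).toNat : ℝ)+1)^ω :=
                mul_le_mul_of_nonneg_right (hCf u hu0) (Real.rpow_nonneg (by positivity) _)
        calc ‖Phi A k u (P u (f u))‖ * wt ω k
            ≤ (K * lam^((k-u).toNat) * ‖P u (f u)‖) * wt ω k :=
              mul_le_mul_of_nonneg_right h1 (hwt_pos k).le
          _ ≤ (K * lam^((k-u).toNat) * (K * ‖f u‖)) * wt ω k := by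
              apply mul_le_mul_of_nonneg_right _ (hwt_pos k).le
              exact mul_le_mul_of_nonneg_left hPn (by positivity)
          _ = (K^2 * lam^((k-u).toNat)) * (‖f u‖ * wt ω k) := by ring
          _ ≤ (K^2 * lam^((k-u).toNat)) * (Cf * (((k-u).toNat : ℝ)+1)^ω) :=
              mul_le_mul_of_nonneg_left hfwt (by positivity)
          _ = (K^2*Cf) * (lam^((k-u).toNat) * (((k-u).toNat : ℝ)+1)^ω) := by ring
      have hre : ∑ u ∈ Finset.Icc (0:ℤ) k, (lam^((k-u).toNat) * (((k-u).toNat:ℝ)+1)^ω)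
          = ∑ m ∈ Finset.range (k.toNat+1), (lam^m * ((m:ℝ)+1)^ω) := by
        apply Finset.sum_nbij' (i := fun u => (k-u).toNat) (j := fun m => k - m)
        · intro a ha
          rw [Finset.mem_Icc] at ha
          rw [Finset.mem_range]
          omega
        · intro a ha
          rw [Finset.mem_range] at ha
          rw [Finset.mem_Icc]
          omega
        · intro a ha
          rw [Finset.mem_Icc] at ha
          omega
        · intro a ha
          rw [Finset.mem_range] at ha
          omega
        · intro a ha
          rfl
      have hsum_le : ∑ u ∈ Finset.Icc (0:ℤ) k,
          (lam^((k-u).toNat) * (((k-u).toNat:ℝ)+1)^ω) ≤ S := by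
        rw [hre]
        exact Summable.sum_le_tsum _ (fun m _ => hgnn m) hg
      calc ‖∑ u ∈ Finset.Icc (0:ℤ) k, Phi A k u (P u (f u))‖ * wt ω k
          ≤ (∑ u ∈ Finset.Icc (0:ℤ) k, ‖Phi A k u (P u (f u))‖) * wt ω k :=
            mul_le_mul_of_nonneg_right (norm_sum_le _ _) (hwt_pos k).le
        _ = ∑ u ∈ Finset.Icc (0:ℤ) k, ‖Phi A k u (P u (f u))‖ * wt ω k :=
            Finset.sum_mul _ _ _
        _ ≤ ∑ u ∈ Finset.Icc (0:ℤ) k,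
              (K^2*Cf) * (lam^((k-u).toNat) * (((k-u).toNat:ℝ)+1)^ω) :=
            Finset.sum_le_sum step
        _ = (K^2*Cf) * ∑ u ∈ Finset.Icc (0:ℤ) k,
              (lam^((k-u).toNat) * (((k-u).toNat:ℝ)+1)^ω) := by
            rw [Finset.mul_sum]
        _ ≤ (K^2*Cf) * S := mul_le_mul_of_nonneg_left hsum_le (by positivity)
        _ = K^2 * Cf * S := by ring
    have hb2 : ‖∑' n : ℕ, Phi A k (k+1+n) (Q (k+1+n) (f (k+1+n)))‖ * wt ω k
        ≤ K^2 * Cf * (1/(1-lam)) := by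
      have h1 : ‖∑' n : ℕ, Phi A k (k+1+n) (Q (k+1+n) (f (k+1+n)))‖
          ≤ ∑' n : ℕ, ‖Phi A k (k+1+n) (Q (k+1+n) (f (k+1+n)))‖ :=
        norm_tsum_le_tsum_norm (hsummN k hk)
      have hbd : ∀ n : ℕ, ‖Phi A k (k+1+n) (Q (k+1+n) (f (k+1+n)))‖ * wt ω k
          ≤ (K^2*Cf*lam) * lam^n := by
        intro n
        have hu : (0:ℤ) ≤ k+1+n := by omega
        have h3 := hterm k hk n
        have h4 : ‖f (k+1+n)‖ * wt ω k ≤ Cf := by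
          calc ‖f (k+1+(n:ℤ))‖ * wt ω k ≤ ‖f (k+1+(n:ℤ))‖ * wt ω (k+1+n) :=
                mul_le_mul_of_nonneg_left (hwt_mono k _ hk (by omega)) (norm_nonneg _)
            _ ≤ Cf := hCf _ hu
        calc ‖Phi A k (k+1+n) (Q (k+1+n) (f (k+1+n)))‖ * wt ω k
            ≤ (K^2 * lam^(n+1) * ‖f (k+1+n)‖) * wt ω k :=
              mul_le_mul_of_nonneg_right h3 (hwt_pos k).le
          _ = (K^2*lam^n*lam) * (‖f (k+1+(n:ℤ))‖ * wt ω k) := by rw [pow_succ]; ring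
          _ ≤ (K^2*lam^n*lam) * Cf := mul_le_mul_of_nonneg_left h4 (by positivity)
          _ = (K^2*Cf*lam) * lam^n := by ring
      have h2 : ‖∑' n : ℕ, Phi A k (k+1+n) (Q (k+1+n) (f (k+1+n)))‖ * wt ω k
          ≤ ∑' n : ℕ, (K^2*Cf*lam) * lam^n := by
        calc ‖∑' n : ℕ, Phi A k (k+1+n) (Q (k+1+n) (f (k+1+n)))‖ * wt ω k
            ≤ (∑' n : ℕ, ‖Phi A k (k+1+n) (Q (k+1+n) (f (k+1+n)))‖) * wt ω k :=
              mul_le_mul_of_nonneg_right h1 (hwt_pos k).le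
          _ = ∑' n : ℕ, ‖Phi A k (k+1+n) (Q (k+1+n) (f (k+1+n)))‖ * wt ω k :=
              tsum_mul_right.symm
          _ ≤ ∑' n : ℕ, (K^2*Cf*lam) * lam^n :=
              Summable.tsum_le_tsum hbd ((hsummN k hk).mul_right _)
                ((summable_geometric_of_lt_one hlam0.le hlam1).mul_left _)
      have h5 : ∑' n : ℕ, (K^2*Cf*lam) * lam^n = (K^2*Cf*lam) * (1-lam)⁻¹ := by
        rw [tsum_mul_left, tsum_geometric_of_lt_one hlam0.le hlam1]
      rw [h5] at h2
      have h6 : (0:ℝ) ≤ K^2*Cf*(1-lam)⁻¹ := by positivity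
      calc ‖∑' n : ℕ, Phi A k (k+1+n) (Q (k+1+n) (f (k+1+n)))‖ * wt ω k
          ≤ (K^2*Cf*lam) * (1-lam)⁻¹ := h2
        _ ≤ K^2*Cf*(1/(1-lam)) := by
            rw [one_div]
            nlinarith
    calc ‖(∑ u ∈ Finset.Icc (0:ℤ) k, Phi A k u (P u (f u)))
          - ∑' n : ℕ, Phi A k (k+1+n) (Q (k+1+n) (f (k+1+n)))‖ * wt ω k
        ≤ (‖∑ u ∈ Finset.Icc (0:ℤ) k, Phi A k u (P u (f u))‖
            + ‖∑' n : ℕ, Phi A k (k+1+n) (Q (k+1+n) (f (k+1+n)))‖) * wt ω k :=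
          mul_le_mul_of_nonneg_right (norm_sub_le _ _) (hwt_pos k).le
      _ = ‖∑ u ∈ Finset.Icc (0:ℤ) k, Phi A k u (P u (f u))‖ * wt ω k
            + ‖∑' n : ℕ, Phi A k (k+1+n) (Q (k+1+n) (f (k+1+n)))‖ * wt ω k := by ring
      _ ≤ K^2*Cf*S + K^2*Cf*(1/(1-lam)) := add_le_add hb1 hb2
      _ = K^2 * (S + 1/(1-lam)) * Cf := by ring
end
end
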